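/- Let (E, F) be an interpolation pair of dyadic wavelet sets and let G ⊆ E ∪ F be a dyadic wavelet set such that G differs from each of E and F on a set of positive Lebesgue measure. Then σ_E^F ∘ σ_E^G = σ_F^G almost everywhere, and σ_F^G is not almost everywhere equal to id_ℝ; in particular {id_ℝ, σ_E^F, σ_E^G} is not a group under composition, so {E, F, G} is not an interpolation family of wavelet sets. -/
import Mathlib


open MeasureTheory Set
open scoped Real symmDiff

noncomputable section

/-- An a.e. (modulo Lebesgue-null sets) partition of the set `A` by the family `P`. -/
def IsAEPartition {ι : Type*} (P : ι → Set ℝ) (A : Set ℝ) : Prop :=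
  volume (A ∆ (⋃ i, P i)) = 0 ∧ ∀ i j : ι, i ≠ j → volume (P i ∩ P j) = 0

/-- `E ⊆ ℝ` is a dyadic wavelet set: its `2πℤ`-translates and its `2ℤ`-dilates each
partition `ℝ` modulo Lebesgue-null sets. -/
def IsDyadicWaveletSet (E : Set ℝ) : Prop :=
  MeasurableSet E ∧
  (∀ᵐ x : ℝ ∂volume, ∃! n : ℤ, x + 2 * Real.pi * n ∈ E) ∧
  (∀ᵐ x : ℝ ∂volume, ∃! k : ℤ, (2 : ℝ) ^ k * x ∈ E)

/-- `σ` is (a representative of) the interpolation map `σ_E^F` for wavelet sets `E, F`. -/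
def IsInterpolationMap (E F : Set ℝ) (σ : ℝ → ℝ) : Prop :=
  Measurable σ ∧ σ 0 = 0 ∧
  (∀ᵐ s : ℝ ∂volume, s ∈ E → σ s ∈ F ∧ ∃ n : ℤ, σ s - s = 2 * Real.pi * n) ∧
  (∀ n : ℤ, ∀ᵐ s : ℝ ∂volume, (2 : ℝ) ^ (-n) * s ∈ E →
    σ s = (2 : ℝ) ^ n * σ ((2 : ℝ) ^ (-n) * s))

/-- The `2π`-congruence domain of a map `σ`. -/
def CongruenceDomain (σ : ℝ → ℝ) : Set ℝ :=
  {s : ℝ | ∃ n : ℤ, σ s - s = 2 * Real.pi * n}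

/-- `A` is `2π`-translation congruent to `B`. -/
def TransCongruent (A B : Set ℝ) : Prop :=
  ∃ P : ℤ → Set ℝ, (∀ n, MeasurableSet (P n)) ∧ IsAEPartition P A ∧
    IsAEPartition (fun (n : ℤ) => (fun x => x + 2 * Real.pi * (n : ℝ)) '' P n) B

/-- `A` is `2`-dilation congruent to `B`. -/
def DilCongruent (A B : Set ℝ) : Prop :=
  ∃ P : ℤ → Set ℝ, (∀ n, MeasurableSet (P n)) ∧ IsAEPartition P A ∧
    IsAEPartition (fun (n : ℤ) => (fun x => (2 : ℝ) ^ n * x) '' P n) B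

lemma ae_scale {P : ℝ → Prop} {c : ℝ} (hc : c ≠ 0) (h : ∀ᵐ x : ℝ ∂volume, P x) :
    ∀ᵐ x : ℝ ∂volume, P (c * x) := by
  rw [ae_iff] at h ⊢
  obtain ⟨N, hsub, hNm, hN0⟩ := exists_measurable_superset_of_null h
  have hss : {x : ℝ | ¬ P (c * x)} ⊆ (c * ·) ⁻¹' N := fun x hx => hsub hx
  refine measure_mono_null hss ?_
  rw [Real.volume_preimage_mul_left hc, hN0, mul_zero]

lemma ae_zpow (k : ℤ) {P : ℝ → Prop} (h : ∀ᵐ x : ℝ ∂volume, P x) :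
    ∀ᵐ x : ℝ ∂volume, P ((2:ℝ) ^ k * x) :=
  ae_scale (zpow_ne_zero k two_ne_zero) h

lemma ae_translate {P : ℝ → Prop} (a : ℝ) (h : ∀ᵐ x : ℝ ∂volume, P x) :
    ∀ᵐ x : ℝ ∂volume, P (x + a) := by
  rw [ae_iff] at h ⊢
  obtain ⟨N, hsub, hNm, hN0⟩ := exists_measurable_superset_of_null h
  have hss : {x : ℝ | ¬ P (x + a)} ⊆ (fun x => x + a) ⁻¹' N := fun x hx => hsub hx
  refine measure_mono_null hss ?_
  rw [measure_preimage_add_right volume a N, hN0]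

lemma two_zpow_cancel (k : ℤ) (s : ℝ) : (2:ℝ) ^ (-k) * ((2:ℝ) ^ k * s) = s := by
  rw [← mul_assoc, ← zpow_add₀ (two_ne_zero (α := ℝ)), neg_add_cancel, zpow_zero, one_mul]

/-- The dilation relation of an interpolation map, restated per `k`:
a.e. `s`, if `2^k s ∈ E` then `σ s = 2^{-k} σ (2^k s)`. -/
lemma interp_dil' {E G : Set ℝ} {σ : ℝ → ℝ} (hσ : IsInterpolationMap E G σ) (k : ℤ) :
    ∀ᵐ s : ℝ ∂volume, (2:ℝ) ^ k * s ∈ E → σ s = (2:ℝ) ^ (-k) * σ ((2:ℝ) ^ k * s) := by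
  have := hσ.2.2.2 (-k)
  simpa using this

/-- Lemma A: interpolation maps pull back a.e. statements. -/
lemma ae_comp_interp {E G : Set ℝ} {σ : ℝ → ℝ} (hE : IsDyadicWaveletSet E)
    (hσ : IsInterpolationMap E G σ) {P : ℝ → Prop} (h : ∀ᵐ x : ℝ ∂volume, P x) :
    ∀ᵐ s : ℝ ∂volume, P (σ s) := by
  rw [ae_iff] at h
  obtain ⟨N, hsub, hNm, hN0⟩ := exists_measurable_superset_of_null h
  have hNae : ∀ᵐ x : ℝ ∂volume, x ∉ N := by
    rw [ae_iff]; simpa using hN0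
  -- For each k : a.e. t, t ∈ E → 2^{-k} * σ t ∉ N
  have W : ∀ k : ℤ, ∀ᵐ t : ℝ ∂volume, t ∈ E → (2:ℝ) ^ (-k) * σ t ∉ N := by
    intro k
    have htr : ∀ᵐ t : ℝ ∂volume, ∀ n : ℤ, (2:ℝ) ^ (-k) * (t + 2 * Real.pi * n) ∉ N := by
      rw [ae_all_iff]
      intro n
      exact ae_translate (2 * Real.pi * n) (ae_zpow (-k) hNae)
    filter_upwards [hσ.2.2.1, htr] with t h1 h2 htE
    obtain ⟨-, n, hn⟩ := h1 htE
    have : σ t = t + 2 * Real.pi * n := by linarith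
    rw [this]; exact h2 n
  -- transfer and combine
  have W' : ∀ᵐ s : ℝ ∂volume, ∀ k : ℤ,
      (2:ℝ) ^ k * s ∈ E → (2:ℝ) ^ (-k) * σ ((2:ℝ) ^ k * s) ∉ N := by
    rw [ae_all_iff]; intro k; exact ae_zpow k (W k)
  have Hdil : ∀ᵐ s : ℝ ∂volume, ∀ k : ℤ,
      (2:ℝ) ^ k * s ∈ E → σ s = (2:ℝ) ^ (-k) * σ ((2:ℝ) ^ k * s) := by
    rw [ae_all_iff]; intro k; exact interp_dil' hσ k
  filter_upwards [hE.2.2, W', Hdil] with s hex hW hD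
  obtain ⟨k, hk, -⟩ := hex
  have hnotN : σ s ∉ N := by rw [hD k hk]; exact hW k hk
  by_contra hP
  exact hnotN (hsub hP)

/-- Lemma B: interpolation maps commute a.e. with all dyadic dilations. -/
lemma interp_dil_comm {E G : Set ℝ} {σ : ℝ → ℝ} (hE : IsDyadicWaveletSet E)
    (hσ : IsInterpolationMap E G σ) :
    ∀ᵐ s : ℝ ∂volume, ∀ n : ℤ, σ ((2:ℝ) ^ n * s) = (2:ℝ) ^ n * σ s := by
  have Hdil : ∀ᵐ s : ℝ ∂volume, ∀ k : ℤ,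
      (2:ℝ) ^ k * s ∈ E → σ s = (2:ℝ) ^ (-k) * σ ((2:ℝ) ^ k * s) := by
    rw [ae_all_iff]; intro k; exact interp_dil' hσ k
  have Hdil2 : ∀ᵐ s : ℝ ∂volume, ∀ n k : ℤ,
      (2:ℝ) ^ k * ((2:ℝ) ^ n * s) ∈ E →
        σ ((2:ℝ) ^ n * s) = (2:ℝ) ^ (-k) * σ ((2:ℝ) ^ k * ((2:ℝ) ^ n * s)) := by
    rw [ae_all_iff]; intro n
    rw [ae_all_iff]; intro k
    exact ae_zpow n (interp_dil' hσ k)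
  filter_upwards [hE.2.2, Hdil, Hdil2] with s hex hD hD2
  intro n
  obtain ⟨k, hk, -⟩ := hex
  have hmul : (2:ℝ) ^ (k - n) * ((2:ℝ) ^ n * s) = (2:ℝ) ^ k * s := by
    rw [← mul_assoc, ← zpow_add₀ (two_ne_zero (α := ℝ)), sub_add_cancel]
  have h1 := hD2 n (k - n) (by rw [hmul]; exact hk)
  rw [hmul] at h1
  have h2 := hD k hk
  rw [h1, h2, ← mul_assoc]
  congr 1
  rw [← zpow_add₀ (two_ne_zero (α := ℝ))]
  congr 1
  ring

/-- Uniqueness of translation representatives. -/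
lemma trans_unique {E : Set ℝ} (hE : IsDyadicWaveletSet E) :
    ∀ᵐ x : ℝ ∂volume, ∀ n m : ℤ,
      x + 2 * Real.pi * n ∈ E → x + 2 * Real.pi * m ∈ E → n = m := by
  filter_upwards [hE.2.1] with x hx n m hn hm
  obtain ⟨j, -, hu⟩ := hx
  rw [hu n hn, hu m hm]

/-- Pointwise: two elements of `E` congruent to the same base point are equal. -/
lemma eq_of_mem_cong {E : Set ℝ} {x y z : ℝ}
    (hu : ∀ n m : ℤ, x + 2 * Real.pi * n ∈ E → x + 2 * Real.pi * m ∈ E → n = m)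
    (hy : y ∈ E) (hz : z ∈ E) {n m : ℤ}
    (hn : y - x = 2 * Real.pi * n) (hm : z - x = 2 * Real.pi * m) : y = z := by
  have h1 : x + 2 * Real.pi * n ∈ E := by
    have : x + 2 * Real.pi * n = y := by linarith
    rwa [this]
  have h2 : x + 2 * Real.pi * m ∈ E := by
    have : x + 2 * Real.pi * m = z := by linarith
    rwa [this]
  have hnm := hu n m h1 h2
  subst hnm
  linarith

/-- Lemma D: for an interpolation pair `(E,F)`, `σEF` maps `F` into `E`
by `2π`-translations, a.e. -/
lemma sigma_on_target {E F : Set ℝ} {σ : ℝ → ℝ} (hE : IsDyadicWaveletSet E)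
    (hF : IsDyadicWaveletSet F) (hσ : IsInterpolationMap E F σ)
    (hpair : ∀ᵐ s : ℝ ∂volume, σ (σ s) = s) :
    ∀ᵐ s : ℝ ∂volume, s ∈ F →
      σ s ∈ E ∧ (∃ n : ℤ, σ s - s = 2 * Real.pi * n) ∧ σ (σ s) = s := by
  have A2 : ∀ᵐ s : ℝ ∂volume, ∃ k : ℤ, (2:ℝ) ^ k * σ s ∈ E := by
    have : ∀ᵐ x : ℝ ∂volume, ∃ k : ℤ, (2:ℝ) ^ k * x ∈ E := by
      filter_upwards [hE.2.2] with x hx; exact hx.exists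
    exact ae_comp_interp hE hσ this
  have A3 : ∀ᵐ s : ℝ ∂volume, ∀ m : ℤ, σ ((2:ℝ) ^ m * σ s) = (2:ℝ) ^ m * σ (σ s) :=
    ae_comp_interp hE hσ (interp_dil_comm hE hσ)
  have A4 : ∀ᵐ s : ℝ ∂volume, ∀ m : ℤ, (2:ℝ) ^ m * σ s ∈ E →
      σ ((2:ℝ) ^ m * σ s) ∈ F ∧
        ∃ n : ℤ, σ ((2:ℝ) ^ m * σ s) - (2:ℝ) ^ m * σ s = 2 * Real.pi * n := by
    rw [ae_all_iff]
    intro m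
    exact ae_comp_interp hE hσ (ae_zpow m hσ.2.2.1)
  filter_upwards [A2, A3, A4, hpair, hF.2.2] with s h2 h3 h4 hinv hFdil hsF
  obtain ⟨k, hk⟩ := h2
  obtain ⟨hmemF, n, hn⟩ := h4 k hk
  have he : σ ((2:ℝ) ^ k * σ s) = (2:ℝ) ^ k * s := by rw [h3 k, hinv]
  rw [he] at hmemF hn
  -- F-dilation uniqueness at s forces k = 0
  obtain ⟨j, -, hju⟩ := hFdil
  have hk0 : k = 0 := by
    have e1 := hju k hmemF
    have e2 := hju 0 (by simpa using hsF)
    omega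
  subst hk0
  simp only [zpow_zero, one_mul] at hk hn
  refine ⟨hk, ⟨-n, ?_⟩, hinv⟩
  push_cast
  linarith

/-- From `A ⊆ᵐ B` deduce `B ⊆ᵐ A`, for wavelet sets. -/
lemma ae_subset_symm {A B : Set ℝ} (hA : IsDyadicWaveletSet A) (hB : IsDyadicWaveletSet B)
    (h : ∀ᵐ x : ℝ ∂volume, x ∈ A → x ∈ B) : ∀ᵐ x : ℝ ∂volume, x ∈ B → x ∈ A := by
  have htr : ∀ᵐ x : ℝ ∂volume, ∀ n : ℤ,
      x + 2 * Real.pi * n ∈ A → x + 2 * Real.pi * n ∈ B := by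
    rw [ae_all_iff]; intro n; exact ae_translate (2 * Real.pi * n) h
  filter_upwards [hA.2.1, htr, trans_unique hB] with x hex h2 hu hxB
  obtain ⟨n, hn, -⟩ := hex
  have hnB : x + 2 * Real.pi * n ∈ B := h2 n hn
  have h0B : x + 2 * Real.pi * (0:ℤ) ∈ B := by simpa using hxB
  have : n = 0 := hu n 0 hnB h0B
  subst this
  simpa using hn

lemma symmdiff_null {A B : Set ℝ} (h1 : ∀ᵐ x : ℝ ∂volume, x ∈ A → x ∈ B)
    (h2 : ∀ᵐ x : ℝ ∂volume, x ∈ B → x ∈ A) : volume (A ∆ B) = 0 := by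
  have h : ∀ᵐ x : ℝ ∂volume, ¬ (x ∈ A ∆ B) := by
    filter_upwards [h1, h2] with x hx1 hx2 hx
    rw [Set.mem_symmDiff] at hx
    rcases hx with ⟨ha, hb⟩ | ⟨hb, ha⟩
    · exact hb (hx1 ha)
    · exact ha (hx2 hb)
  have := ae_iff.mp h
  simpa using this

lemma cong_self (x : ℝ) : x - x = 2 * Real.pi * ((0:ℤ):ℝ) := by push_cast; ring

/-- The core identity: `σEF ∘ σEG = σFG` a.e. on `F`. -/
lemma core_on_F {E F G : Set ℝ} (hE : IsDyadicWaveletSet E) (hF : IsDyadicWaveletSet F)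
    (hG : IsDyadicWaveletSet G) (hGsub : G ⊆ E ∪ F) {σEF σEG σFG : ℝ → ℝ}
    (hσEF : IsInterpolationMap E F σEF)
    (hpair : ∀ᵐ s : ℝ ∂volume, σEF (σEF s) = s)
    (hσEG : IsInterpolationMap E G σEG)
    (hσFG : IsInterpolationMap F G σFG) :
    ∀ᵐ s : ℝ ∂volume, s ∈ F → σEF (σEG s) = σFG s := by
  have hEGd : ∀ᵐ s : ℝ ∂volume, ∀ k : ℤ,
      (2:ℝ) ^ k * s ∈ E → σEG s = (2:ℝ) ^ (-k) * σEG ((2:ℝ) ^ k * s) := by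
    rw [ae_all_iff]; intro k; exact interp_dil' hσEG k
  have hEGt : ∀ᵐ s : ℝ ∂volume, ∀ k : ℤ, (2:ℝ) ^ k * s ∈ E →
      σEG ((2:ℝ) ^ k * s) ∈ G ∧
        ∃ n : ℤ, σEG ((2:ℝ) ^ k * s) - (2:ℝ) ^ k * s = 2 * Real.pi * n := by
    rw [ae_all_iff]; intro k; exact ae_zpow k hσEG.2.2.1
  have hGuniq : ∀ᵐ s : ℝ ∂volume, ∀ k : ℤ, ∀ n m : ℤ,
      (2:ℝ) ^ k * s + 2 * Real.pi * n ∈ G → (2:ℝ) ^ k * s + 2 * Real.pi * m ∈ G → n = m := by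
    rw [ae_all_iff]; intro k; exact ae_zpow k (trans_unique hG)
  have hEuniq : ∀ᵐ s : ℝ ∂volume, ∀ k : ℤ, ∀ n m : ℤ,
      (2:ℝ) ^ k * s + 2 * Real.pi * n ∈ E → (2:ℝ) ^ k * s + 2 * Real.pi * m ∈ E → n = m := by
    rw [ae_all_iff]; intro k; exact ae_zpow k (trans_unique hE)
  have hDv : ∀ᵐ s : ℝ ∂volume, ∀ k : ℤ, σEG ((2:ℝ) ^ k * s) ∈ F →
      σEF (σEG ((2:ℝ) ^ k * s)) ∈ E ∧
        (∃ n : ℤ, σEF (σEG ((2:ℝ) ^ k * s)) - σEG ((2:ℝ) ^ k * s) = 2 * Real.pi * n) ∧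
        σEF (σEF (σEG ((2:ℝ) ^ k * s))) = σEG ((2:ℝ) ^ k * s) := by
    rw [ae_all_iff]; intro k
    exact ae_zpow k (ae_comp_interp hE hσEG (sigma_on_target hE hF hσEF hpair))
  have hBv : ∀ᵐ s : ℝ ∂volume, ∀ k : ℤ, ∀ n : ℤ,
      σEF ((2:ℝ) ^ n * σEG ((2:ℝ) ^ k * s)) = (2:ℝ) ^ n * σEF (σEG ((2:ℝ) ^ k * s)) := by
    rw [ae_all_iff]; intro k
    exact ae_zpow k (ae_comp_interp hE hσEG (interp_dil_comm hE hσEF))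
  filter_upwards [hE.2.2, hF.2.2, hG.2.2, hEGd, hEGt, hGuniq, hEuniq, hDv, hBv,
    sigma_on_target hE hF hσEF hpair, hσFG.2.2.1, hσEF.2.2.1, trans_unique hF] with s
    hEdil hFdil hGdil hEGd' hEGt' hGuniq' hEuniq' hDv' hBv' hDs hFGt hEFt hFuniq hsF
  obtain ⟨k, hk, hkuniq⟩ := hEdil
  obtain ⟨hvG, n1, hn1⟩ := hEGt' k hk
  have hFuniq0 : ∀ j : ℤ, (2:ℝ) ^ j * s ∈ F → j = 0 := by
    obtain ⟨j₀, -, hju⟩ := hFdil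
    intro j hj
    have e1 := hju j hj
    have e2 := hju 0 (by simpa using hsF)
    omega
  have hEuniq0 : ∀ n m : ℤ, s + 2 * Real.pi * n ∈ E → s + 2 * Real.pi * m ∈ E → n = m := by
    have := hEuniq' 0; simpa using this
  have hGuniq0 : ∀ n m : ℤ, s + 2 * Real.pi * n ∈ G → s + 2 * Real.pi * m ∈ G → n = m := by
    have := hGuniq' 0; simpa using this
  obtain ⟨hwG, m2, hm2⟩ := hFGt hsF
  by_cases huG : (2:ℝ) ^ k * s ∈ G
  · -- Case 1 : the E-representative of the dilation orbit of s is in G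
    have hvu : σEG ((2:ℝ) ^ k * s) = (2:ℝ) ^ k * s :=
      eq_of_mem_cong (hGuniq' k) hvG huG hn1 (cong_self _)
    have hss : σEG s = s := by rw [hEGd' k hk, hvu, two_zpow_cancel]
    rw [hss]
    obtain ⟨hEFsE, ⟨m1, hm1⟩, -⟩ := hDs hsF
    rcases hGsub hwG with hwE | hwF
    · exact (eq_of_mem_cong hEuniq0 hEFsE hwE hm1 hm2)
    · have hws : σFG s = s := eq_of_mem_cong hFuniq hwF hsF hm2 (cong_self _)
      have hsG : s ∈ G := hws ▸ hwG
      obtain ⟨m₀, -, hmu⟩ := hGdil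
      have hk0 : k = 0 := by
        have e1 := hmu k huG
        have e2 := hmu 0 (by simpa using hsG)
        omega
      subst hk0
      simp only [zpow_zero, one_mul] at hk
      obtain ⟨hEFsF, m3, hm3⟩ := hEFt hk
      have hEFss : σEF s = s := eq_of_mem_cong hFuniq hEFsF hsF hm3 (cong_self _)
      rw [hEFss, hws]
  · -- Case 2 : that representative is not in G ; then s itself is in G
    have hsG : s ∈ G := by
      obtain ⟨m, hmG, -⟩ := hGdil
      rcases hGsub hmG with hmE | hmF
      · exact absurd (hkuniq m hmE ▸ hmG) huG
      · have hm0 := hFuniq0 m hmF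
        subst hm0
        simpa using hmG
    have hvF : σEG ((2:ℝ) ^ k * s) ∈ F := by
      rcases hGsub hvG with hvE | hvF
      · exfalso
        have : σEG ((2:ℝ) ^ k * s) = (2:ℝ) ^ k * s :=
          eq_of_mem_cong (hEuniq' k) hvE hk hn1 (cong_self _)
        exact huG (this ▸ hvG)
      · exact hvF
    obtain ⟨hEFvE, ⟨m3, hm3⟩, -⟩ := hDv' k hvF
    have hEFvu : σEF (σEG ((2:ℝ) ^ k * s)) = (2:ℝ) ^ k * s := by
      refine eq_of_mem_cong (hEuniq' k) hEFvE hk (n := m3 + n1) (m := 0) ?_ (cong_self _)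
      push_cast
      linarith
    have hτ : σEF (σEG s) = s := by
      rw [hEGd' k hk, hBv' k (-k), hEFvu, two_zpow_cancel]
    have hws : σFG s = s := eq_of_mem_cong hGuniq0 hwG hsG hm2 (cong_self _)
    rw [hτ, hws]

lemma two_zpow_cancel' (k : ℤ) (s : ℝ) : (2:ℝ) ^ k * ((2:ℝ) ^ (-k) * s) = s := by
  simpa using two_zpow_cancel (-k) s


/-- Let `(E, F)` be an interpolation pair of dyadic wavelet sets and
`G ⊆ E ∪ F` a dyadic wavelet set differing from each of `E` and `F` on a set of
positive measure.  Then `σ_E^F ∘ σ_E^G = σ_F^G` a.e., `σ_F^G` is not a.e. equal to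
`id`, and `{id, σ_E^F, σ_E^G}` is not closed under composition (modulo null sets),
so it is not a group and `{E, F, G}` is not an interpolation family. -/
theorem stmt_4 (E F G : Set ℝ) (hE : IsDyadicWaveletSet E) (hF : IsDyadicWaveletSet F)
    (hG : IsDyadicWaveletSet G) (hGsub : G ⊆ E ∪ F)
    (hGE : 0 < volume (G ∆ E)) (hGF : 0 < volume (G ∆ F))
    (σEF σEG σFG : ℝ → ℝ)
    (hσEF : IsInterpolationMap E F σEF)
    (hpair : ∀ᵐ s : ℝ ∂volume, σEF (σEF s) = s)
    (hσEG : IsInterpolationMap E G σEG)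
    (hσFG : IsInterpolationMap F G σFG) :
    (∀ᵐ s : ℝ ∂volume, σEF (σEG s) = σFG s) ∧
    ¬ (σFG =ᵐ[volume] id) ∧
    (∀ h : ℝ → ℝ, h = id ∨ h = σEF ∨ h = σEG → ¬ (σEF ∘ σEG =ᵐ[volume] h)) := by
  -- Part 1
  have part1 : ∀ᵐ s : ℝ ∂volume, σEF (σEG s) = σFG s := by
    have hcore := core_on_F hE hF hG hGsub hσEF hpair hσEG hσFG
    have hcorek : ∀ᵐ s : ℝ ∂volume, ∀ j : ℤ,
        (2:ℝ) ^ j * s ∈ F → σEF (σEG ((2:ℝ) ^ j * s)) = σFG ((2:ℝ) ^ j * s) := by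
      rw [ae_all_iff]; intro j; exact ae_zpow j hcore
    have hBEG := interp_dil_comm hE hσEG
    have hBEF_at : ∀ᵐ s : ℝ ∂volume, ∀ j : ℤ,
        σEF ((2:ℝ) ^ j * σEG s) = (2:ℝ) ^ j * σEF (σEG s) :=
      ae_comp_interp hE hσEG (interp_dil_comm hE hσEF)
    have hBFG := interp_dil_comm hF hσFG
    filter_upwards [hF.2.2, hcorek, hBEG, hBEF_at, hBFG] with s hFdil hc h1 h2 h3
    obtain ⟨j, hj, -⟩ := hFdil
    have e := hc j hj
    rw [h1 j, h2 j, h3 j] at e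
    exact mul_left_cancel₀ (zpow_ne_zero j two_ne_zero) e
  have hEq : σEF ∘ σEG =ᵐ[volume] σFG := by
    filter_upwards [part1] with s h using h
  -- Part 2
  have part2 : ¬ (σFG =ᵐ[volume] id) := by
    intro hid
    have hFsubG : ∀ᵐ x : ℝ ∂volume, x ∈ F → x ∈ G := by
      filter_upwards [hσFG.2.2.1, hid] with x h1 h2 hx
      have := (h1 hx).1
      rwa [h2] at this
    have hGsubF := ae_subset_symm hF hG hFsubG
    exact hGF.ne' (symmdiff_null hGsubF hFsubG)
  refine ⟨part1, part2, ?_⟩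
  rintro h (hcase | hcase | hcase) hyp <;> rw [hcase] at hyp
  · -- h = id
    exact part2 (hEq.symm.trans hyp)
  · -- h = σEF
    have hFGEF : σFG =ᵐ[volume] σEF := hEq.symm.trans hyp
    have hGsubE : ∀ᵐ x : ℝ ∂volume, x ∈ G → x ∈ E := by
      filter_upwards [hσFG.2.2.1, trans_unique hG,
        sigma_on_target hE hF hσEF hpair, hFGEF] with x h1 hu hD hfe hxG
      rcases hGsub hxG with hxE | hxF
      · exact hxE
      · obtain ⟨hwG, n, hn⟩ := h1 hxF
        have hwx : σFG x = x := eq_of_mem_cong hu hwG hxG hn (cong_self _)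
        have hEFx : σEF x = x := by rw [← hfe, hwx]
        have hmem := (hD hxF).1
        rwa [hEFx] at hmem
    have hEsubG := ae_subset_symm hG hE hGsubE
    exact hGE.ne' (symmdiff_null hGsubE hEsubG)
  · -- h = σEG
    have hEGFG : σEG =ᵐ[volume] σFG := hyp.symm.trans hEq
    have hEGd : ∀ᵐ s : ℝ ∂volume, ∀ k : ℤ,
        (2:ℝ) ^ k * s ∈ E → σEG s = (2:ℝ) ^ (-k) * σEG ((2:ℝ) ^ k * s) := by
      rw [ae_all_iff]; intro k; exact interp_dil' hσEG k
    have hEGt : ∀ᵐ s : ℝ ∂volume, ∀ k : ℤ, (2:ℝ) ^ k * s ∈ E →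
        σEG ((2:ℝ) ^ k * s) ∈ G ∧
          ∃ n : ℤ, σEG ((2:ℝ) ^ k * s) - (2:ℝ) ^ k * s = 2 * Real.pi * n := by
      rw [ae_all_iff]; intro k; exact ae_zpow k hσEG.2.2.1
    have hGuniq : ∀ᵐ s : ℝ ∂volume, ∀ k : ℤ, ∀ n m : ℤ,
        (2:ℝ) ^ k * s + 2 * Real.pi * n ∈ G → (2:ℝ) ^ k * s + 2 * Real.pi * m ∈ G → n = m := by
      rw [ae_all_iff]; intro k; exact ae_zpow k (trans_unique hG)
    have hFsubE : ∀ᵐ s : ℝ ∂volume, s ∈ F → s ∈ E := by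
      filter_upwards [hE.2.2, hF.2.2, hG.2.2, hEGd, hEGt, hGuniq, hσFG.2.2.1, hEGFG] with s
        hEdil hFdil hGdil hEGd' hEGt' hGuniq' hFGt hfe hsF
      by_contra hsE
      obtain ⟨k, hk, hkuniq⟩ := hEdil
      obtain ⟨hvG, n1, hn1⟩ := hEGt' k hk
      obtain ⟨hwG, m2, hm2⟩ := hFGt hsF
      have hEGsG : σEG s ∈ G := by rw [hfe]; exact hwG
      have hEGscong : σEG s - s = 2 * Real.pi * m2 := by rw [hfe]; exact hm2
      have hFuniq0 : ∀ j : ℤ, (2:ℝ) ^ j * s ∈ F → j = 0 := by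
        obtain ⟨j₀, -, hju⟩ := hFdil
        intro j hj
        have e1 := hju j hj
        have e2 := hju 0 (by simpa using hsF)
        omega
      have hk0 : k ≠ 0 := by
        intro hkk
        subst hkk
        simp only [zpow_zero, one_mul] at hk
        exact hsE hk
      by_cases huG : (2:ℝ) ^ k * s ∈ G
      · have hvu : σEG ((2:ℝ) ^ k * s) = (2:ℝ) ^ k * s :=
          eq_of_mem_cong (hGuniq' k) hvG huG hn1 (cong_self _)
        have hss : σEG s = s := by rw [hEGd' k hk, hvu, two_zpow_cancel]
        have hsG : s ∈ G := by rw [← hss]; exact hEGsG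
        obtain ⟨m₀, -, hmu⟩ := hGdil
        have e1 := hmu k huG
        have e2 := hmu 0 (by simpa using hsG)
        omega
      · have hsG : s ∈ G := by
          obtain ⟨m, hmG, -⟩ := hGdil
          rcases hGsub hmG with hmE | hmF
          · exact absurd (hkuniq m hmE ▸ hmG) huG
          · have hm0 := hFuniq0 m hmF
            subst hm0
            simpa using hmG
        have hGuniq0 : ∀ n m : ℤ, s + 2 * Real.pi * n ∈ G → s + 2 * Real.pi * m ∈ G → n = m := by
          have := hGuniq' 0; simpa using this
        have hss : σEG s = s := eq_of_mem_cong hGuniq0 hEGsG hsG hEGscong (cong_self _)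
        have hveq : σEG ((2:ℝ) ^ k * s) = (2:ℝ) ^ k * s := by
          have h' : (2:ℝ) ^ (-k) * σEG ((2:ℝ) ^ k * s) = s := by
            rw [← hEGd' k hk]; exact hss
          calc σEG ((2:ℝ) ^ k * s)
              = (2:ℝ) ^ k * ((2:ℝ) ^ (-k) * σEG ((2:ℝ) ^ k * s)) := (two_zpow_cancel' k _).symm
            _ = (2:ℝ) ^ k * s := by rw [h']
        exact huG (hveq ▸ hvG)
    have hGsubE : ∀ᵐ x : ℝ ∂volume, x ∈ G → x ∈ E := by
      filter_upwards [hFsubE] with x hfe hxG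
      rcases hGsub hxG with hxE | hxF
      · exact hxE
      · exact hfe hxF
    have hEsubG := ae_subset_symm hG hE hGsubE
    exact hGE.ne' (symmdiff_null hGsubE hEsubG)
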